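/- Fix d₁, d₂ with d₂ > d₁ ≥ 1 and d₂ − d₁ ≥ √(2(d₁+d₂)). In the Braess graph with edges (s,u), (v,t) of latency x² + x, edges (s,v), (u,t) of latency a·x with a = 1 + (d₁+d₂)/2, and edge (u,v) of constant latency b = d₁d₂/4, the Wardrop equilibrium for demand d = (d₁+d₂)/2 has flow at least 1/12 on edge (u,v). -/
import Mathlib

set_option maxHeartbeats 1600000


/-- Second part of Claim 5.7. In the Braess graph with edges `(s,u)`, `(v,t)` of
latency `x² + x`, edges `(s,v)`, `(u,t)` of latency `a·x` with `a = 1 + (d₁+d₂)/2`,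
and edge `(u,v)` of constant latency `b = d₁d₂/4`, where `d₂ > d₁ ≥ 1` and
`d₂ − d₁ ≥ √(2(d₁+d₂))`, the Wardrop equilibrium for demand `d = (d₁+d₂)/2`
(path flows `y₁` on `s-u-t`, `y₂` on `s-v-t`, `y₃` on `s-u-v-t`) has flow at least
`1/12` on the Braess edge `(u,v)`. -/
theorem braess_edge_flow_lower_bound
    (d1 d2 d y1 y2 y3 a b c1 c2 c3 : ℝ)
    (hd1 : 1 ≤ d1) (h12 : d1 < d2)
    (hgap : Real.sqrt (2 * (d1 + d2)) ≤ d2 - d1)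
    (hd : d = (d1 + d2) / 2)
    (ha : a = 1 + (d1 + d2) / 2) (hb : b = d1 * d2 / 4)
    (hy1 : 0 ≤ y1) (hy2 : 0 ≤ y2) (hy3 : 0 ≤ y3) (hsum : y1 + y2 + y3 = d)
    (hc1 : c1 = ((y1 + y3) ^ 2 + (y1 + y3)) + a * y1)
    (hc2 : c2 = a * y2 + ((y2 + y3) ^ 2 + (y2 + y3)))
    (hc3 : c3 = ((y1 + y3) ^ 2 + (y1 + y3)) + b + ((y2 + y3) ^ 2 + (y2 + y3)))
    (heq1 : 0 < y1 → c1 ≤ c2 ∧ c1 ≤ c3)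
    (heq2 : 0 < y2 → c2 ≤ c1 ∧ c2 ≤ c3)
    (heq3 : 0 < y3 → c3 ≤ c1 ∧ c3 ≤ c2) :
    1 / 12 ≤ y3 := by

  subst hd ha hb hc1 hc2 hc3
  -- basic facts
  have hd2 : (1:ℝ) < d2 := lt_of_le_of_lt hd1 h12
  have hδ : 2 * (d1 + d2) ≤ (d2 - d1) ^ 2 := by
    have h0 : (0:ℝ) ≤ 2 * (d1 + d2) := by nlinarith
    have h1 : Real.sqrt (2 * (d1 + d2)) ^ 2 = 2 * (d1 + d2) := Real.sq_sqrt h0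
    have h2 : (0:ℝ) ≤ Real.sqrt (2 * (d1 + d2)) := Real.sqrt_nonneg _
    nlinarith [pow_le_pow_left₀ h2 hgap 2]
  have hbpos : (0:ℝ) < d1 * d2 / 4 := by nlinarith
  -- y3 > 0
  have hy3pos : 0 < y3 := by
    rcases lt_or_eq_of_le hy3 with h | h
    · exact h
    have hy3z : y3 = 0 := h.symm
    subst hy3z
    rcases lt_or_eq_of_le hy1 with h1 | h1
    · rcases lt_or_eq_of_le hy2 with h2 | h2
      · obtain ⟨e12, e13⟩ := heq1 h1
        obtain ⟨e21, e23⟩ := heq2 h2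
        have hyy : y1 = y2 := by
          have ha1 : y1 ≤ y2 := by by_contra hc; push_neg at hc; nlinarith
          have ha2 : y2 ≤ y1 := by by_contra hc; push_neg at hc; nlinarith
          linarith
        exfalso
        nlinarith [sq_nonneg (d1 - d2)]
      · -- y2 = 0, y1 = d
        have hy2z : y2 = 0 := h2.symm
        exfalso
        obtain ⟨e12, _⟩ := heq1 h1
        nlinarith
    · -- y1 = 0, y2 = d
      have hy1z : y1 = 0 := h1.symm
      have h2 : 0 < y2 := by nlinarith
      exfalso
      obtain ⟨e21, _⟩ := heq2 h2
      nlinarith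
  obtain ⟨e31, e32⟩ := heq3 hy3pos
  have hy1pos : 0 < y1 := by
    rcases lt_or_eq_of_le hy1 with h | h
    · exact h
    exfalso; nlinarith [sq_nonneg (y2 + y3)]
  have hy2pos : 0 < y2 := by
    rcases lt_or_eq_of_le hy2 with h | h
    · exact h
    exfalso; nlinarith [sq_nonneg (y1 + y3)]
  obtain ⟨e12, e13⟩ := heq1 hy1pos
  obtain ⟨e21, e23⟩ := heq2 hy2pos
  have hyy : y1 = y2 := by
    clear e13 e23 e31 e32 heq1 heq2 heq3 hgap hδ
    have hpos : (0:ℝ) < y1 + y2 + 2*y3 + 2 + (d1+d2)/2 := by nlinarith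
    have ha1 : y1 ≤ y2 := by
      by_contra hc; push_neg at hc
      nlinarith [mul_pos (sub_pos.mpr hc) hpos]
    have ha2 : y2 ≤ y1 := by
      by_contra hc; push_neg at hc
      nlinarith [mul_pos (sub_pos.mpr hc) hpos]
    linarith
  -- main inequality: δ²/4 ≤ y3² + 4d·y3 + 4y3 with d = (d1+d2)/2
  have hmain : (d2 - d1) ^ 2 / 4 ≤ y3 ^ 2 + 2 * (d1 + d2) * y3 + 4 * y3 := by
    nlinarith [e13]
  have hy3d : y3 ≤ (d1 + d2) / 2 := by nlinarith
  nlinarith [mul_nonneg hy3 (sub_nonneg.mpr hδ), hδ, sq_nonneg (d2 - d1),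
    mul_le_mul_of_nonneg_left hy3d (le_of_lt hy3pos)]
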